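/- Let k ≥ 1 be an integer, 0 < T ≤ ∞, and let h₁, h₂ : [0,1] × [0,T) → ℝ be continuous functions which on (0,1) × (0,T) have continuous partial derivatives ∂_t h_i, ∂_r h_i, ∂_r² h_i satisfying ∂_t h_i(r,t) = ∂_r² h_i(r,t) + ∂_r h_i(r,t)/r − k²·sin(2·h_i(r,t))/(2r²). Let 0 ≤ t₁ < t₂ < T and 0 ≤ R₁ < R₂ ≤ 1; if R₁ = 0, assume in addition that either h₁(0,t) ≠ h₂(0,t) for every t ∈ [0,T), or there is m ∈ ℤ with h₁(0,t) = h₂(0,t) = mπ for every t ∈ [0,T). Then every nonempty connected component A of the set {(r,t) ∈ [R₁,R₂] × [t₁,t₂] : h₁(r,t) > h₂(r,t)} intersects ({R₁} × [t₁,t₂]) ∪ ({R₂} × [t₁,t₂]) ∪ ([R₁,R₂] × {t₁}). -/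

import Mathlib

open Real Set

/-- Partial derivative in the radial variable `r` of `h(r,t)`. -/
noncomputable def pdr (h : ℝ × ℝ → ℝ) (p : ℝ × ℝ) : ℝ :=
  deriv (fun r => h (r, p.2)) p.1

/-- Second partial derivative in `r` of `h(r,t)`. -/
noncomputable def pdrr (h : ℝ × ℝ → ℝ) (p : ℝ × ℝ) : ℝ :=
  deriv (fun r => pdr h (r, p.2)) p.1

/-- Partial derivative in the time variable `t` of `h(r,t)`. -/
noncomputable def pdt (h : ℝ × ℝ → ℝ) (p : ℝ × ℝ) : ℝ :=
  deriv (fun t => h (p.1, t)) p.2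

/-- `h` is a classical solution of the `k`-equivariant radial harmonic map heat flow equation
`∂_t h = ∂_r² h + ∂_r h / r − k² sin(2h)/(2r²)` on the set `S`: the relevant partial derivatives
exist, are continuous on `S`, and satisfy the equation there. -/
def IsClassicalSol (k : ℕ) (S : Set (ℝ × ℝ)) (h : ℝ × ℝ → ℝ) : Prop :=
  (∀ p ∈ S, DifferentiableAt ℝ (fun r => h (r, p.2)) p.1 ∧
      DifferentiableAt ℝ (fun r => pdr h (r, p.2)) p.1 ∧
      DifferentiableAt ℝ (fun t => h (p.1, t)) p.2) ∧
  ContinuousOn (pdr h) S ∧ ContinuousOn (pdrr h) S ∧ ContinuousOn (pdt h) S ∧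
  ∀ p ∈ S, pdt h p = pdrr h p + pdr h p / p.1 - (k : ℝ) ^ 2 * sin (2 * h p) / (2 * p.1 ^ 2)

section Helpers

open Filter Metric

lemma relOpen {g : ℝ × ℝ → ℝ} {s : Set (ℝ × ℝ)} (hg : ContinuousOn g s) :
    ∃ V : Set (ℝ × ℝ), IsOpen V ∧ s ∩ V = {p | p ∈ s ∧ 0 < g p} := by
  have h : IsOpen {x : s | 0 < g x} := by
    have hc := continuousOn_iff_continuous_restrict.mp hg
    exact isOpen_Ioi.preimage hc
  rw [isOpen_induced_iff] at h
  obtain ⟨V, hV, hVeq⟩ := h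
  refine ⟨V, hV, ?_⟩
  ext p
  constructor
  · rintro ⟨hps, hpV⟩
    have : (⟨p, hps⟩ : s) ∈ Subtype.val ⁻¹' V := hpV
    rw [hVeq] at this
    exact ⟨hps, this⟩
  · rintro ⟨hps, hpg⟩
    have : (⟨p, hps⟩ : s) ∈ {x : s | 0 < g x} := hpg
    rw [← hVeq] at this
    exact ⟨hps, this⟩

lemma conn_nbhd {Q V : Set (ℝ × ℝ)} (hQ : Convex ℝ Q) (hV : IsOpen V)
    {p₀ q : ℝ × ℝ} (hp₀ : p₀ ∈ Q ∩ V) (hq : q ∈ Q ∩ V)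
    (hcl : q ∈ closure (connectedComponentIn (Q ∩ V) p₀)) :
    ∃ ε > 0, Metric.ball q ε ∩ Q ⊆ connectedComponentIn (Q ∩ V) p₀ := by
  obtain ⟨ε, hε, hball⟩ := Metric.isOpen_iff.mp hV q hq.2
  refine ⟨ε, hε, ?_⟩
  set A := connectedComponentIn (Q ∩ V) p₀ with hA
  set N : Set (ℝ × ℝ) := Metric.ball q ε ∩ Q with hN
  have hNsub : N ⊆ Q ∩ V := fun x hx => ⟨hx.2, hball hx.1⟩
  have hNpc : IsPreconnected N := ((convex_ball q ε).inter hQ).isPreconnected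
  obtain ⟨a, haA, hadist⟩ := Metric.mem_closure_iff.mp hcl ε hε
  have haN : a ∈ N := ⟨Metric.mem_ball'.mpr hadist, (connectedComponentIn_subset _ _ haA).1⟩
  have hApc : IsPreconnected A := isPreconnected_connectedComponentIn
  have hU : IsPreconnected (A ∪ N) := hApc.union a haA haN hNpc
  have hsub : A ∪ N ⊆ A :=
    hU.subset_connectedComponentIn (x := p₀) (Or.inl (mem_connectedComponentIn hp₀))
      (union_subset (connectedComponentIn_subset _ _) hNsub)
  intro x hx
  exact hsub (Or.inr (by rw [hN]; exact ⟨hx.1, hx.2⟩))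

lemma deriv_nonneg_of_left_max {f : ℝ → ℝ} {d a : ℝ} (hf : HasDerivAt f d a)
    (hmax : ∀ᶠ t in nhdsWithin a (Iio a), f t ≤ f a) : 0 ≤ d := by
  have hs := hasDerivAt_iff_tendsto_slope.mp hf
  have hs' : Tendsto (slope f a) (nhdsWithin a (Iio a)) (nhds d) :=
    hs.mono_left (nhdsWithin_mono _ (fun x hx => ne_of_lt hx))
  refine ge_of_tendsto hs' ?_
  filter_upwards [hmax, self_mem_nhdsWithin] with t ht ht'
  have ht'' : t < a := ht'
  rw [slope_def_field, div_nonneg_iff]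
  right
  constructor <;> linarith

lemma second_deriv_nonpos_of_max {f f' : ℝ → ℝ} {d a : ℝ}
    (hmax : IsLocalMax f a)
    (hd : ∀ᶠ x in nhds a, HasDerivAt f (f' x) x)
    (hd' : HasDerivAt f' d a) : d ≤ 0 := by
  by_contra hpos
  push_neg at hpos
  have hfa : f' a = 0 := hmax.hasDerivAt_eq_zero hd.self_of_nhds
  have hs := hasDerivAt_iff_tendsto_slope.mp hd'
  have hs' : Tendsto (slope f' a) (nhdsWithin a (Ioi a)) (nhds d) :=
    hs.mono_left (nhdsWithin_mono _ (fun x hx => ne_of_gt hx))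
  have hev : ∀ᶠ x in nhdsWithin a (Ioi a), 0 < slope f' a x :=
    hs'.eventually (eventually_gt_nhds hpos)
  have hev' : ∀ᶠ x in nhdsWithin a (Ioi a), 0 < f' x := by
    filter_upwards [hev, self_mem_nhdsWithin] with x hx hx'
    have hxa : a < x := hx'
    rw [slope_def_field, hfa, sub_zero] at hx
    have := mul_pos hx (sub_pos.mpr hxa)
    rwa [div_mul_cancel₀ _ (ne_of_gt (sub_pos.mpr hxa))] at this
  obtain ⟨u, hau, hu⟩ := (nhdsGT_basis a).eventually_iff.mp hev'
  obtain ⟨δ, hδ, hδball⟩ := Metric.eventually_nhds_iff.mp (hd.and hmax)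
  set b := min u (a + δ/2) with hb
  have hab : a < b := lt_min hau (by linarith)
  have hdist : ∀ x ∈ Icc a b, dist x a < δ := by
    intro x hx
    rw [Real.dist_eq, abs_lt]
    have h1 : x ≤ b := hx.2
    have h2 : b ≤ a + δ/2 := min_le_right _ _
    have h3 : a ≤ x := hx.1
    constructor <;> linarith
  have hmono : StrictMonoOn f (Icc a b) := by
    apply strictMonoOn_of_deriv_pos (convex_Icc a b)
    · intro x hx
      exact ((hδball (hdist x hx)).1.continuousAt).continuousWithinAt
    · intro x hx
      rw [interior_Icc] at hx
      have hxd := (hδball (hdist x (Ioo_subset_Icc_self hx))).1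
      rw [hxd.deriv]
      exact hu ⟨hx.1, lt_of_lt_of_le hx.2 (min_le_left _ _)⟩
  have h1 : f a < f b := hmono (left_mem_Icc.mpr hab.le) (right_mem_Icc.mpr hab.le) hab
  have h2 : f b ≤ f a := (hδball (hdist b (right_mem_Icc.mpr hab.le))).2
  linarith

lemma abs_sin_sub_sin_le (a b : ℝ) : |Real.sin a - Real.sin b| ≤ |a - b| := by
  rw [Real.sin_sub_sin]
  calc |2 * Real.sin ((a - b) / 2) * Real.cos ((a + b) / 2)|
      = 2 * |Real.sin ((a - b) / 2)| * |Real.cos ((a + b) / 2)| := by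
        rw [abs_mul, abs_mul]; norm_num
    _ ≤ 2 * |(a - b) / 2| * 1 := by
        apply mul_le_mul
        · exact mul_le_mul_of_nonneg_left (Real.abs_sin_le_abs) (by norm_num)
        · exact Real.abs_cos_le_one _
        · exact abs_nonneg _
        · positivity
    _ = |a - b| := by rw [abs_div, abs_two]; ring

lemma comp_aux {K ρ r wp S : ℝ} (hw : 0 < wp) (hρ : 0 < ρ) (hρr : ρ ≤ r)
    (hS : -(2*wp) ≤ S) : 0 < 2*(K^2/ρ^2+1)*r^2*wp + K^2*S := by
  have hρ2 : (0:ℝ) < ρ^2 := by positivity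
  have hr2 : ρ^2 ≤ r^2 := by nlinarith
  have hLρ : (K^2/ρ^2+1)*ρ^2 = K^2 + ρ^2 := by field_simp
  have hmono : (K^2/ρ^2+1)*ρ^2 ≤ (K^2/ρ^2+1)*r^2 :=
    mul_le_mul_of_nonneg_left hr2 (by positivity)
  have h6 : (K^2+ρ^2) ≤ (K^2/ρ^2+1)*r^2 := hLρ ▸ hmono
  have h7 : (K^2+ρ^2) * wp ≤ ((K^2/ρ^2+1)*r^2) * wp := mul_le_mul_of_nonneg_right h6 hw.le
  have h5 : K^2*(-(2 * wp)) ≤ K^2*S := mul_le_mul_of_nonneg_left hS (by positivity)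
  nlinarith [mul_pos hρ2 hw]

lemma comp_aux2 {L r wp S K : ℝ} (hL : 0 < L) (hr : 0 < r) (hw : 0 < wp)
    (hS : 0 ≤ S) (hK : 0 ≤ K) : 0 < 2*L*r^2*wp + K*S := by
  nlinarith [mul_pos (mul_pos hL (pow_pos hr 2)) hw, mul_nonneg hK hS]

end Helpers

theorem component_of_h1_gt_h2_touches_parabolic_boundary
    (k : ℕ) (hk : 1 ≤ k) (T : EReal) (hT : 0 < T)
    (h₁ h₂ : ℝ × ℝ → ℝ)
    (hc1 : ContinuousOn h₁ {p : ℝ × ℝ | p.1 ∈ Icc (0:ℝ) 1 ∧ 0 ≤ p.2 ∧ (p.2 : EReal) < T})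
    (hc2 : ContinuousOn h₂ {p : ℝ × ℝ | p.1 ∈ Icc (0:ℝ) 1 ∧ 0 ≤ p.2 ∧ (p.2 : EReal) < T})
    (hs1 : IsClassicalSol k {p : ℝ × ℝ | p.1 ∈ Ioo (0:ℝ) 1 ∧ 0 < p.2 ∧ (p.2 : EReal) < T} h₁)
    (hs2 : IsClassicalSol k {p : ℝ × ℝ | p.1 ∈ Ioo (0:ℝ) 1 ∧ 0 < p.2 ∧ (p.2 : EReal) < T} h₂)
    (t₁ t₂ : ℝ) (ht₁ : 0 ≤ t₁) (ht12 : t₁ < t₂) (ht₂ : (t₂ : EReal) < T)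
    (R₁ R₂ : ℝ) (hR₁ : 0 ≤ R₁) (hR12 : R₁ < R₂) (hR₂ : R₂ ≤ 1)
    (hzero : R₁ = 0 →
      (∀ t : ℝ, 0 ≤ t → (t : EReal) < T → h₁ (0, t) ≠ h₂ (0, t)) ∨
      ∃ m : ℤ, ∀ t : ℝ, 0 ≤ t → (t : EReal) < T →
        h₁ (0, t) = (m : ℝ) * π ∧ h₂ (0, t) = (m : ℝ) * π)
    (A : Set (ℝ × ℝ)) (p₀ : ℝ × ℝ)
    (hp₀ : p₀ ∈ {p : ℝ × ℝ | p ∈ Icc R₁ R₂ ×ˢ Icc t₁ t₂ ∧ h₂ p < h₁ p})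
    (hA : A = connectedComponentIn
      {p : ℝ × ℝ | p ∈ Icc R₁ R₂ ×ˢ Icc t₁ t₂ ∧ h₂ p < h₁ p} p₀) :
    (A ∩ ((({R₁} : Set ℝ) ×ˢ Icc t₁ t₂) ∪ (({R₂} : Set ℝ) ×ˢ Icc t₁ t₂)
        ∪ (Icc R₁ R₂ ×ˢ ({t₁} : Set ℝ)))).Nonempty := by
  classical
  by_contra hcon
  rw [Set.not_nonempty_iff_eq_empty] at hcon
  set Q : Set (ℝ × ℝ) := Icc R₁ R₂ ×ˢ Icc t₁ t₂ with hQdef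
  set D : Set (ℝ × ℝ) := {p : ℝ × ℝ | p.1 ∈ Icc (0:ℝ) 1 ∧ 0 ≤ p.2 ∧ (p.2 : EReal) < T} with hDdef
  set P : Set (ℝ × ℝ) := {p : ℝ × ℝ | p.1 ∈ Ioo (0:ℝ) 1 ∧ 0 < p.2 ∧ (p.2 : EReal) < T} with hPdef
  set w : ℝ × ℝ → ℝ := fun p => h₁ p - h₂ p with hwdef
  have hQD : Q ⊆ D := by
    rintro ⟨r, t⟩ ⟨hr, ht⟩
    refine ⟨⟨le_trans hR₁ hr.1, le_trans hr.2 hR₂⟩, le_trans ht₁ ht.1, ?_⟩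
    exact lt_of_le_of_lt (EReal.coe_le_coe_iff.mpr ht.2) ht₂
  have hQconv : Convex ℝ Q := (convex_Icc R₁ R₂).prod (convex_Icc t₁ t₂)
  have hQclosed : IsClosed Q := (isClosed_Icc).prod (isClosed_Icc)
  have hQcomp : IsCompact Q := (isCompact_Icc).prod (isCompact_Icc)
  have hwQ : ContinuousOn w Q := ((hc1.mono hQD).sub (hc2.mono hQD))
  obtain ⟨V, hVopen, hVeq⟩ := relOpen hwQ
  have hSeq : {p : ℝ × ℝ | p ∈ Icc R₁ R₂ ×ˢ Icc t₁ t₂ ∧ h₂ p < h₁ p} = Q ∩ V := by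
    rw [hVeq]
    ext p
    simp only [mem_setOf_eq, hwdef, sub_pos, hQdef]
  rw [hSeq] at hA hp₀
  have hp₀A : p₀ ∈ A := by rw [hA]; exact mem_connectedComponentIn hp₀
  have hAsub : A ⊆ Q ∩ V := by rw [hA]; exact connectedComponentIn_subset _ _
  have hAQ : A ⊆ Q := fun p hp => (hAsub hp).1
  have hAw : ∀ p ∈ A, 0 < w p := by
    intro p hp
    have := hAsub hp
    rw [hVeq] at this
    exact this.2
  have hnotbdry : ∀ p ∈ A, p ∉ ((({R₁} : Set ℝ) ×ˢ Icc t₁ t₂) ∪ (({R₂} : Set ℝ) ×ˢ Icc t₁ t₂)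
        ∪ (Icc R₁ R₂ ×ˢ ({t₁} : Set ℝ))) := by
    intro p hp hmem
    exact absurd (Set.mem_inter hp hmem) (by rw [hcon]; exact notMem_empty p)
  have hint : ∀ p ∈ A, R₁ < p.1 ∧ p.1 < R₂ ∧ t₁ < p.2 := by
    intro p hp
    obtain ⟨hp1, hp2⟩ := hAQ hp
    refine ⟨lt_of_le_of_ne hp1.1 ?_, lt_of_le_of_ne hp1.2 ?_, lt_of_le_of_ne hp2.1 ?_⟩
    · intro h
      exact hnotbdry p hp (Or.inl (Or.inl ⟨h.symm, hp2⟩))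
    · intro h
      exact hnotbdry p hp (Or.inl (Or.inr ⟨h, hp2⟩))
    · intro h
      exact hnotbdry p hp (Or.inr ⟨hp1, h.symm⟩)
  have hclosQ : closure A ⊆ Q := closure_minimal hAQ hQclosed
  have hclos : ∀ q ∈ closure A, q ∈ A ∨ w q = 0 := by
    intro q hq
    have hqQ : q ∈ Q := hclosQ hq
    have hge : 0 ≤ w q := by
      have hne : (nhdsWithin q A).NeBot := mem_closure_iff_nhdsWithin_neBot.mp hq
      have ht : Filter.Tendsto w (nhdsWithin q A) (nhds (w q)) :=
        ((hwQ q hqQ).mono hAQ : ContinuousWithinAt w A q)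
      refine ge_of_tendsto ht ?_
      filter_upwards [self_mem_nhdsWithin] with x hx
      exact (hAw x hx).le
    rcases eq_or_lt_of_le hge with h0 | hpos
    · exact Or.inr h0.symm
    · left
      have hqQV : q ∈ Q ∩ V := by
        rw [hVeq]; exact ⟨hqQ, hpos⟩
      obtain ⟨ε, hε, hball⟩ := conn_nbhd hQconv hVopen hp₀ hqQV (hA ▸ hq)
      rw [hA]
      exact hball ⟨Metric.mem_ball_self hε, hqQ⟩
  have hcomp : ∀ ρ : ℝ, 0 < ρ → ∀ p ∈ A, ρ ≤ p.1 →
      0 < 2*((k:ℝ)^2/ρ^2+1)*p.1^2*(w p) + (k:ℝ)^2*(Real.sin (2*h₁ p) - Real.sin (2*h₂ p)) := by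
    intro ρ hρ p hp hρp
    have hw := hAw p hp
    have habs := _root_.abs_sin_sub_sin_le (2*h₁ p) (2*h₂ p)
    have h2w : |2*h₁ p - 2*h₂ p| = 2 * w p := by
      rw [abs_of_pos (by simp only [hwdef] at hw ⊢; linarith)]
      simp only [hwdef]; ring
    rw [h2w] at habs
    have hsin : -(2 * w p) ≤ Real.sin (2*h₁ p) - Real.sin (2*h₂ p) := by
      have := neg_abs_le (Real.sin (2*h₁ p) - Real.sin (2*h₂ p))
      linarith
    exact comp_aux hw hρ hρp hsin
  have key : ∃ L : ℝ, 0 < L ∧ ∀ p ∈ A,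
      0 < 2*L*p.1^2*(w p) + (k:ℝ)^2*(Real.sin (2*h₁ p) - Real.sin (2*h₂ p)) := by
    rcases eq_or_lt_of_le hR₁ with hR0 | hRpos
    · rcases hzero hR0.symm with haxis | ⟨m, hm⟩
      · have hAne : (closure A).Nonempty := ⟨p₀, subset_closure hp₀A⟩
        have hAcomp : IsCompact (closure A) :=
          hQcomp.of_isClosed_subset isClosed_closure hclosQ
        obtain ⟨q, hqmem, hqmin⟩ :=
          hAcomp.exists_isMinOn hAne (continuous_fst.continuousOn)
        have hqQ : q ∈ Q := hclosQ hqmem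
        have hq1 : 0 < q.1 := by
          rcases eq_or_lt_of_le (hR0 ▸ hqQ.1.1 : (0:ℝ) ≤ q.1) with h0 | h0
          · exfalso
            have hqnA : q ∉ A := by
              intro hqA
              have := (hint q hqA).1
              rw [← hR0] at this
              linarith [this, h0.symm.le]
            have hwq : w q = 0 := ((hclos q hqmem).resolve_left hqnA)
            have h0t : (0:ℝ) ≤ q.2 := le_trans ht₁ hqQ.2.1
            have hTt : ((q.2:ℝ):EReal) < T :=
              lt_of_le_of_lt (EReal.coe_le_coe_iff.mpr hqQ.2.2) ht₂
            have hqeq : q = ((0:ℝ), q.2) := by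
              rw [Prod.ext_iff]; exact ⟨h0.symm, rfl⟩
            apply haxis q.2 h0t hTt
            have : h₁ q - h₂ q = 0 := hwq
            rw [hqeq] at this
            linarith
          · exact h0
        exact ⟨(k:ℝ)^2/q.1^2+1, by positivity,
          fun p hp => hcomp q.1 hq1 p hp (hqmin (subset_closure hp))⟩
      · set g : ℝ×ℝ → ℝ :=
          fun p => min (π/4 - |h₁ p - (m:ℝ)*π|) (π/4 - |h₂ p - (m:ℝ)*π|) with hgdef
        have hgc : ContinuousOn g Q := by
          have hg1 : ContinuousOn (fun p => π/4 - |h₁ p - (m:ℝ)*π|) Q :=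
            continuousOn_const.sub ((hc1.mono hQD).sub continuousOn_const).abs
          have hg2 : ContinuousOn (fun p => π/4 - |h₂ p - (m:ℝ)*π|) Q :=
            continuousOn_const.sub ((hc2.mono hQD).sub continuousOn_const).abs
          exact continuous_min.comp_continuousOn (hg1.prodMk hg2)
        obtain ⟨V', hV'open, hV'eq⟩ := relOpen hgc
        have hK : IsCompact (({(0:ℝ)} : Set ℝ) ×ˢ Icc t₁ t₂) :=
          isCompact_singleton.prod isCompact_Icc
        have hKV' : (({(0:ℝ)} : Set ℝ) ×ˢ Icc t₁ t₂) ⊆ V' := by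
          rintro ⟨r, t⟩ ⟨hr, ht⟩
          have hr0 : r = 0 := hr
          have h0t : (0:ℝ) ≤ t := le_trans ht₁ ht.1
          have hTt : ((t:ℝ):EReal) < T := lt_of_le_of_lt (EReal.coe_le_coe_iff.mpr ht.2) ht₂
          obtain ⟨e1, e2⟩ := hm t h0t hTt
          have hQmem : ((r,t) : ℝ×ℝ) ∈ Q := by
            refine ⟨?_, ht⟩
            rw [hr0]
            exact ⟨hR0.symm.le, le_of_lt (hR0 ▸ hR12)⟩
          have : ((r,t) : ℝ×ℝ) ∈ Q ∩ V' := by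
            rw [hV'eq]
            refine ⟨hQmem, ?_⟩
            have hg0 : g (r, t) = π/4 := by
              simp only [hgdef, hr0]
              rw [e1, e2]
              simp
            rw [hg0]
            positivity
          exact this.2
        obtain ⟨δ, hδ, hthick⟩ := hK.exists_thickening_subset_open hV'open hKV'
        refine ⟨(k:ℝ)^2/(δ/2)^2+1, by positivity, ?_⟩
        intro p hp
        rcases le_or_gt (δ/2) p.1 with hge | hlt
        · exact hcomp (δ/2) (by linarith) p hp hge
        · have hr : 0 < p.1 := by
            have := (hint p hp).1
            rw [← hR0] at this
            exact this
          have hpV' : p ∈ V' := by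
            apply hthick
            rw [Metric.mem_thickening_iff]
            refine ⟨((0:ℝ), p.2), ⟨rfl, (hAQ hp).2⟩, ?_⟩
            rw [Prod.dist_eq]
            simp only [dist_self]
            rw [Real.dist_eq, sub_zero, abs_of_pos hr, max_eq_left hr.le]
            linarith
          have hpg : 0 < g p := by
            have hpm : p ∈ Q ∩ V' := ⟨hAQ hp, hpV'⟩
            rw [hV'eq] at hpm
            exact hpm.2
          have h1b : |h₁ p - (m:ℝ)*π| < π/4 := by
            have := lt_of_lt_of_le hpg (min_le_left _ _)
            linarith
          have h2b : |h₂ p - (m:ℝ)*π| < π/4 := by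
            have := lt_of_lt_of_le hpg (min_le_right _ _)
            linarith
          have hw := hAw p hp
          have hwpos : h₂ p < h₁ p := by
            simp only [hwdef] at hw
            linarith
          have hsins : Real.sin (2*h₂ p) ≤ Real.sin (2*h₁ p) := by
            have keyper : ∀ x:ℝ, Real.sin (2*x) = Real.sin (2*(x - (m:ℝ)*π)) := by
              intro x
              have := Real.sin_sub_int_mul_two_pi (2*x) m
              rw [← this]
              ring_nf
            rw [keyper (h₁ p), keyper (h₂ p)]
            rw [abs_lt] at h1b h2b
            have hb1 : 2*(h₁ p - (m:ℝ)*π) ∈ Icc (-(π/2)) (π/2) := by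
              constructor <;> [linarith [h1b.1]; linarith [h1b.2]]
            have hb2 : 2*(h₂ p - (m:ℝ)*π) ∈ Icc (-(π/2)) (π/2) := by
              constructor <;> [linarith [h2b.1]; linarith [h2b.2]]
            exact (Real.strictMonoOn_sin hb2 hb1 (by linarith)).le
          exact comp_aux2 (by positivity) hr hw (by linarith) (by positivity)
    · exact ⟨(k:ℝ)^2/R₁^2+1, by positivity,
        fun p hp => hcomp R₁ hRpos p hp (hAQ hp).1.1⟩
  obtain ⟨L, hL, hkey⟩ := key
  have hAne : (closure A).Nonempty := ⟨p₀, subset_closure hp₀A⟩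
  have hAcomp : IsCompact (closure A) := hQcomp.of_isClosed_subset isClosed_closure hclosQ
  set f : ℝ×ℝ → ℝ := fun p => w p * Real.exp (-L * p.2) with hfdef
  have hfc : ContinuousOn f (closure A) :=
    (hwQ.mono hclosQ).mul
      ((Real.continuous_exp.comp (continuous_const.mul continuous_snd)).continuousOn)
  obtain ⟨ps, hpsmem, hpsmax'⟩ := hAcomp.exists_isMaxOn hAne hfc
  have hpsmax : ∀ x ∈ closure A, f x ≤ f ps := isMaxOn_iff.mp hpsmax'
  have hfp₀ : 0 < f p₀ := mul_pos (hAw p₀ hp₀A) (Real.exp_pos _)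
  have hfps : 0 < f ps := lt_of_lt_of_le hfp₀ (hpsmax p₀ (subset_closure hp₀A))
  have hwps : 0 < w ps := by
    have hexp := Real.exp_pos (-L * ps.2)
    by_contra hcc
    push_neg at hcc
    simp only [hfdef] at hfps
    nlinarith
  have hpsA : ps ∈ A := by
    rcases hclos ps hpsmem with h | h
    · exact h
    · exfalso; rw [h] at hwps; exact lt_irrefl 0 hwps
  obtain ⟨hrR1, hrR2, hpst1⟩ := hint ps hpsA
  have hpsQ := hAQ hpsA
  have hpst2 : ps.2 ≤ t₂ := hpsQ.2.2
  have hr0 : 0 < ps.1 := lt_of_le_of_lt hR₁ hrR1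
  have hr1' : ps.1 < 1 := lt_of_lt_of_le hrR2 hR₂
  have ht0 : 0 < ps.2 := lt_of_le_of_lt ht₁ hpst1
  have hpsT : ((ps.2:ℝ):EReal) < T := lt_of_le_of_lt (EReal.coe_le_coe_iff.mpr hpst2) ht₂
  have hpsP : ps ∈ P := ⟨⟨hr0, hr1'⟩, ht0, hpsT⟩
  have hPopen : IsOpen P := by
    have h1 : IsOpen {p : ℝ×ℝ | p.1 ∈ Ioo (0:ℝ) 1} := isOpen_Ioo.preimage continuous_fst
    have h2 : IsOpen {p : ℝ×ℝ | 0 < p.2} := isOpen_Ioi.preimage continuous_snd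
    have h3 : IsOpen {p : ℝ×ℝ | ((p.2:ℝ):EReal) < T} :=
      isOpen_Iio.preimage (continuous_coe_real_ereal.comp continuous_snd)
    exact h1.inter (h2.inter h3)
  obtain ⟨ε₀, hε₀, hball⟩ :=
    conn_nbhd hQconv hVopen hp₀ (hAsub hpsA) (hA ▸ subset_closure hpsA)
  rw [← hA] at hball
  set ε := min ε₀ (min (min (ps.1 - R₁) (R₂ - ps.1)) (ps.2 - t₁)) with hεdef
  have hε : 0 < ε :=
    lt_min hε₀ (lt_min (lt_min (by linarith) (by linarith)) (by linarith))
  have hεε₀ : ε ≤ ε₀ := min_le_left _ _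
  have hεa : ε ≤ ps.1 - R₁ := le_trans (min_le_right _ _) (le_trans (min_le_left _ _) (min_le_left _ _))
  have hεb : ε ≤ R₂ - ps.1 := le_trans (min_le_right _ _) (le_trans (min_le_left _ _) (min_le_right _ _))
  have hεc : ε ≤ ps.2 - t₁ := le_trans (min_le_right _ _) (min_le_right _ _)
  -- radial direction
  have hrline : ∀ r : ℝ, |r - ps.1| < ε → ((r, ps.2) : ℝ×ℝ) ∈ A := by
    intro r hrd
    rw [abs_lt] at hrd
    apply hball
    constructor
    · rw [Metric.mem_ball, Prod.dist_eq]
      simp only [dist_self]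
      rw [Real.dist_eq]
      rw [max_eq_left (abs_nonneg _)]
      rw [abs_lt]
      constructor <;> [linarith [hrd.1]; linarith [hrd.2]]
    · exact ⟨⟨by linarith [hrd.1], by linarith [hrd.2]⟩, hpsQ.2⟩
  have hu_max : IsLocalMax (fun x => h₁ (x, ps.2) - h₂ (x, ps.2)) ps.1 := by
    refine Metric.eventually_nhds_iff.mpr ⟨ε, hε, ?_⟩
    intro r hrd
    rw [Real.dist_eq] at hrd
    have hrA := hrline r hrd
    have hle := hpsmax _ (subset_closure hrA)
    simp only [hfdef, hwdef] at hle
    have hexp := Real.exp_pos (-L * ps.2)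
    exact le_of_mul_le_mul_right hle hexp
  have hmemnear : ∀ᶠ r in nhds ps.1, ((r, ps.2) : ℝ×ℝ) ∈ P := by
    have hcont : Continuous (fun r : ℝ => ((r, ps.2) : ℝ×ℝ)) :=
      continuous_id.prodMk continuous_const
    exact hcont.continuousAt.preimage_mem_nhds (hPopen.mem_nhds hpsP)
  have hud : ∀ᶠ r in nhds ps.1, HasDerivAt (fun x => h₁ (x, ps.2) - h₂ (x, ps.2))
      ((fun r => pdr h₁ (r, ps.2) - pdr h₂ (r, ps.2)) r) r := by
    filter_upwards [hmemnear] with r hr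
    exact ((hs1.1 _ hr).1.hasDerivAt).sub ((hs2.1 _ hr).1.hasDerivAt)
  have hd' : HasDerivAt (fun r => pdr h₁ (r, ps.2) - pdr h₂ (r, ps.2))
      (pdrr h₁ ps - pdrr h₂ ps) ps.1 :=
    ((hs1.1 ps hpsP).2.1.hasDerivAt).sub ((hs2.1 ps hpsP).2.1.hasDerivAt)
  have hsecond : pdrr h₁ ps - pdrr h₂ ps ≤ 0 :=
    second_deriv_nonpos_of_max hu_max hud hd'
  have hfirst : pdr h₁ ps - pdr h₂ ps = 0 :=
    hu_max.hasDerivAt_eq_zero hud.self_of_nhds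
  -- time direction
  have hvd : HasDerivAt (fun t => (h₁ (ps.1, t) - h₂ (ps.1, t)) * Real.exp (-L * t))
      ((pdt h₁ ps - pdt h₂ ps) * Real.exp (-L * ps.2)
        + (h₁ ps - h₂ ps) * (Real.exp (-L * ps.2) * (-L))) ps.2 := by
    have ha : HasDerivAt (fun t => h₁ (ps.1, t) - h₂ (ps.1, t)) (pdt h₁ ps - pdt h₂ ps) ps.2 :=
      ((hs1.1 ps hpsP).2.2.hasDerivAt).sub ((hs2.1 ps hpsP).2.2.hasDerivAt)
    have h0 : HasDerivAt (fun t : ℝ => -L * t) (-L) ps.2 := by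
      simpa using (hasDerivAt_id ps.2).const_mul (-L)
    exact ha.mul h0.exp
  have hvmax : ∀ᶠ t in nhdsWithin ps.2 (Iio ps.2),
      (h₁ (ps.1, t) - h₂ (ps.1, t)) * Real.exp (-L * t)
        ≤ (h₁ (ps.1, ps.2) - h₂ (ps.1, ps.2)) * Real.exp (-L * ps.2) := by
    have hIoo : Ioo (ps.2 - ε) ps.2 ∈ nhdsWithin ps.2 (Iio ps.2) :=
      Ioo_mem_nhdsLT_of_mem ⟨by linarith, le_refl _⟩
    filter_upwards [hIoo] with t ht
    have htA : ((ps.1, t) : ℝ×ℝ) ∈ A := by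
      apply hball
      constructor
      · rw [Metric.mem_ball, Prod.dist_eq]
        simp only [dist_self]
        rw [Real.dist_eq]
        rw [max_eq_right (abs_nonneg _)]
        rw [abs_lt]
        constructor <;> [linarith [ht.1]; linarith [ht.2]]
      · exact ⟨hpsQ.1, ⟨by linarith [ht.1], le_trans ht.2.le hpst2⟩⟩
    have hle := hpsmax _ (subset_closure htA)
    simp only [hfdef, hwdef] at hle
    exact hle
  have hvge : 0 ≤ (pdt h₁ ps - pdt h₂ ps) * Real.exp (-L * ps.2)
      + (h₁ ps - h₂ ps) * (Real.exp (-L * ps.2) * (-L)) :=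
    deriv_nonneg_of_left_max hvd hvmax
  -- combine
  have hexp := Real.exp_pos (-L * ps.2)
  have h8 : L * (h₁ ps - h₂ ps) ≤ pdt h₁ ps - pdt h₂ ps := by
    nlinarith [hvge, hexp]
  have he1 := hs1.2.2.2.2 ps hpsP
  have he2 := hs2.2.2.2.2 ps hpsP
  have h9 : pdt h₁ ps - pdt h₂ ps = (pdrr h₁ ps - pdrr h₂ ps)
      + (pdr h₁ ps - pdr h₂ ps)/ps.1
      - ((k:ℝ)^2*(Real.sin (2*h₁ ps) - Real.sin (2*h₂ ps)))/(2*ps.1^2) := by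
    rw [he1, he2]; ring
  have h11 : pdt h₁ ps - pdt h₂ ps
      ≤ -(((k:ℝ)^2*(Real.sin (2*h₁ ps) - Real.sin (2*h₂ ps)))/(2*ps.1^2)) := by
    rw [h9, hfirst]
    simp only [zero_div, add_zero]
    linarith [hsecond]
  have hr2pos : (0:ℝ) < 2*ps.1^2 := by positivity
  have h10 : ((k:ℝ)^2*(Real.sin (2*h₁ ps) - Real.sin (2*h₂ ps)))/(2*ps.1^2) * (2*ps.1^2)
      = (k:ℝ)^2*(Real.sin (2*h₁ ps) - Real.sin (2*h₂ ps)) :=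
    div_mul_cancel₀ _ (ne_of_gt hr2pos)
  have h12 : L * (h₁ ps - h₂ ps) * (2*ps.1^2)
      ≤ -((k:ℝ)^2*(Real.sin (2*h₁ ps) - Real.sin (2*h₂ ps))) := by
    have := mul_le_mul_of_nonneg_right (le_trans h8 h11) hr2pos.le
    rwa [neg_mul, h10] at this
  have hkeyps := hkey ps hpsA
  have hweq : w ps = h₁ ps - h₂ ps := rfl
  rw [hweq] at hkeyps
  have h13 : 2*L*ps.1^2*(h₁ ps - h₂ ps) = L * (h₁ ps - h₂ ps) * (2*ps.1^2) := by ring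
  linarith [hkeyps, h12, h13]
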